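/- Let λ, μ ∈ ℤ^n_{++} with #λ = #μ = r and z̄(λ) = z̄(μ), and suppose that for every vertex i ≥ 1 the diagram D_λ carries the symbol < at i if and only if D_μ does, and carries > at i if and only if D_μ does. Let λ_red, μ_red ∈ ℤ^{2r+z̄(λ)}_{++} be the integral dominant weights whose weight diagrams are obtained from D_λ and D_μ respectively by deleting all vertices carrying < or > and relabelling the remaining vertices in order as 0,1,2,…. Then for every θ ∈ {0,1}^r one has λ = R_θ(μ) if and only if λ_red = R_θ(μ_red); consequently a_{λμ} = a_{λ_red, μ_red}. -/

import Mathlib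

open scoped Classical

noncomputable section

/-- An integral dominant weight in `ℤⁿ₊₊`: weakly decreasing entries, and any
repeated entry must be zero. -/
structure DomWeight (n : ℕ) where
  coeff : Fin n → ℤ
  antitone' : ∀ i j : Fin n, i ≤ j → coeff j ≤ coeff i
  regular' : ∀ i j : Fin n, i ≠ j → coeff i = coeff j → coeff i = 0

namespace DomWeight

variable {n : ℕ}

/-- The multiset of entries of a weight. -/
def entries (l : DomWeight n) : Multiset ℤ :=
  Multiset.map l.coeff Finset.univ.val

/-- `k` occurs as an entry of `l`. -/
def IsEntry (l : DomWeight n) (k : ℤ) : Prop := ∃ i, l.coeff i = k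

/-- `z(λ)`: the number of zero entries. -/
def zNum (l : DomWeight n) : ℕ := (Finset.univ.filter fun i => l.coeff i = 0).card

/-- `z̄(λ)`: the parity of `z(λ)`. -/
def barz (l : DomWeight n) : ℕ := l.zNum % 2

/-- The number `⌊z(λ)/2⌋` of `×`'s at vertex `0` of the weight diagram. -/
def numX0 (l : DomWeight n) : ℕ := l.zNum / 2

/-- Vertex `v ≥ 1` of the weight diagram carries the symbol `×`. -/
def HasX (l : DomWeight n) (v : ℕ) : Prop :=
  0 < v ∧ l.IsEntry (v : ℤ) ∧ l.IsEntry (-(v : ℤ))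

/-- Vertex `v ≥ 1` of the weight diagram carries the symbol `>`. -/
def HasGt (l : DomWeight n) (v : ℕ) : Prop :=
  0 < v ∧ l.IsEntry (v : ℤ) ∧ ¬ l.IsEntry (-(v : ℤ))

/-- Vertex `v ≥ 1` of the weight diagram carries the symbol `<`. -/
def HasLt (l : DomWeight n) (v : ℕ) : Prop :=
  0 < v ∧ ¬ l.IsEntry (v : ℤ) ∧ l.IsEntry (-(v : ℤ))

/-- Vertex `v ≥ 1` of the weight diagram is empty. -/
def EmptyAt (l : DomWeight n) (v : ℕ) : Prop :=
  0 < v ∧ ¬ l.IsEntry (v : ℤ) ∧ ¬ l.IsEntry (-(v : ℤ))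

/-- The finite set of positive vertices carrying a `×`. -/
def posXs (l : DomWeight n) : Finset ℕ :=
  (Finset.univ.image fun i => (l.coeff i).toNat).filter fun v => l.HasX v

/-- `#λ`, the degree of atypicality: the total number of `×`'s in the diagram. -/
def atyp (l : DomWeight n) : ℕ := l.numX0 + l.posXs.card

/-- The vertex `x_i` at which the `i`-th `×` (numbered `1,…,r` from bottom to top
at vertex `0`, then from left to right) sits. -/
def xVertex (l : DomWeight n) (i : ℕ) : ℕ :=
  if i ≤ l.numX0 then 0 else (l.posXs.sort (· ≤ ·)).getD (i - l.numX0 - 1) 0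

/-- The distance `d_λ(s,t)`: the number of empty vertices minus the number of `×`'s
strictly between `s` and `t`. -/
def dist (l : DomWeight n) (s t : ℕ) : ℤ :=
  (((Finset.Ioo s t).filter fun v => l.EmptyAt v).card : ℤ)
    - (((Finset.Ioo s t).filter fun v => l.HasX v).card : ℤ)

/-- The length `ℓ_λ(i,t)` from the `i`-th `×` to the vertex `t`. -/
def len (l : DomWeight n) (i t : ℕ) : ℤ :=
  if 0 < l.xVertex i then l.dist (l.xVertex i) t
  else l.dist 0 t - 2 * ((l.numX0 : ℤ) - (i : ℤ)) - (l.barz : ℤ)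

/-- `t` is the destination of the right move `R_i(λ)`: the first empty vertex
`t > x_i` with `ℓ_λ(i,t) = 0` and `ℓ_λ(i,s) < 0` for all empty `s` in between. -/
def IsRightMoveDest (l : DomWeight n) (i t : ℕ) : Prop :=
  l.EmptyAt t ∧ l.xVertex i < t ∧ l.len i t = 0 ∧
    ∀ s, l.xVertex i < s → s < t → l.EmptyAt s → l.len i s < 0

end DomWeight

/-- The set of indices `i ∈ {1,…,r}` selected by `θ ∈ {0,1}^r`. -/
def selected (r : ℕ) (θ : ℕ → Bool) : Finset ℕ :=
  (Finset.Icc 1 r).filter fun i => θ i = true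

namespace DomWeight

variable {n : ℕ}

/-- `l = R_θ(m)`: the weight diagram of `l` is obtained from that of `m` by
performing, independently in `D_m`, the right moves `R_i(m)` for all selected `i`. -/
def IsRightPathRes (m : DomWeight n) (θ : ℕ → Bool) (l : DomWeight n) : Prop :=
  ∃ dest : ℕ → ℕ,
    (∀ i ∈ selected m.atyp θ, m.IsRightMoveDest i (dest i)) ∧
    l.entries + ∑ i ∈ selected m.atyp θ,
        ({(m.xVertex i : ℤ), -(m.xVertex i : ℤ)} : Multiset ℤ)
      = m.entries + ∑ i ∈ selected m.atyp θ,
        ({(dest i : ℤ), -(dest i : ℤ)} : Multiset ℤ)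

/-- The matrix coefficient `a_{λμ} = [E(μ) : L(λ)]`. -/
def aCoeff (l m : DomWeight n) : ℚ :=
  if ∃ θ : ℕ → Bool, m.IsRightPathRes θ l then
    (2 : ℚ) ^ (((m.zNum : ℤ) - (l.zNum : ℤ)) / 2) else 0

/-- A single raising move of the `i`-th `×`, as a relation on dominant weights. -/
def RMoveRel (i : ℕ) (m l : DomWeight n) : Prop :=
  ∃ t, m.IsRightMoveDest i t ∧
    l.entries + ({(m.xVertex i : ℤ), -(m.xVertex i : ℤ)} : Multiset ℤ)
      = m.entries + ({(t : ℤ), -(t : ℤ)} : Multiset ℤ)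

/-- `k`-fold iterate of the raising move of the `i`-th `×`. -/
def RMoveIter (i : ℕ) : ℕ → DomWeight n → DomWeight n → Prop
  | 0, m, l => m = l
  | k + 1, m, l => ∃ ν, RMoveRel i m ν ∧ RMoveIter i k ν l

/-- Composition of iterated raising moves along a list of indices. -/
def RChainAux (θ : ℕ → ℕ) : List ℕ → DomWeight n → DomWeight n → Prop
  | [], m, l => m = l
  | i :: rest, m, l => ∃ ν, RMoveIter i (θ i) m ν ∧ RChainAux θ rest ν l

/-- `l = R'_θ(m) = R_1^{θ_1} R_2^{θ_2} ⋯ R_r^{θ_r}(m)` where `r = #m`. -/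
def IsRPrimeRes (m : DomWeight n) (θ : ℕ → ℕ) (l : DomWeight n) : Prop :=
  RChainAux θ ((List.range' 1 m.atyp).reverse) m l

/-- The set of `θ ∈ ℕ^r` (supported on `{1,…,r}`, `r = #m`) with `R'_θ(m) = l`. -/
def bTheta (m l : DomWeight n) : Set (ℕ → ℕ) :=
  {θ | (∀ i, i ∉ Finset.Icc 1 m.atyp → θ i = 0) ∧ m.IsRPrimeRes θ l}

/-- The matrix coefficient `b_{λμ}`. -/
def bCoeff (l m : DomWeight n) : ℚ :=
  (2 : ℚ) ^ (((m.zNum : ℤ) - (l.zNum : ℤ)) / 2) *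
    ∑ᶠ θ ∈ bTheta m l, (-1 : ℚ) ^ (∑ i ∈ Finset.Icc 1 m.atyp, θ i)

/-- The total order on `ℤⁿ₊₊`: `λ < μ` iff at the first index where they differ,
the entry of `μ` is smaller. -/
def wlt (l m : DomWeight n) : Prop :=
  ∃ p : Fin n, (∀ q : Fin n, q < p → l.coeff q = m.coeff q) ∧ m.coeff p < l.coeff p

end DomWeight


namespace DomWeight
variable {n : ℕ}

/-- The relabelling of kept vertices: `keepMap l v` is the new label of the
vertex `v` after deleting all vertices carrying `<` or `>`. -/
def keepMap (l : DomWeight n) (v : ℕ) : ℕ :=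
  ((Finset.Icc 1 v).filter fun u => ¬ l.HasGt u ∧ ¬ l.HasLt u).card

end DomWeight

namespace DomWeight

variable {n : ℕ}

/-- A vertex carrying neither `<` nor `>` (a "kept" vertex, positive). -/
def kept (w : DomWeight n) (v : ℕ) : Prop := 0 < v ∧ ¬ w.HasGt v ∧ ¬ w.HasLt v

lemma mem_entries {w : DomWeight n} {k : ℤ} : k ∈ w.entries ↔ w.IsEntry k := by
  simp only [entries, Multiset.mem_map, IsEntry]
  constructor
  · rintro ⟨i, _, h⟩; exact ⟨i, h⟩
  · rintro ⟨i, h⟩; exact ⟨i, Finset.mem_univ_val i, h⟩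

lemma count_entries_zero (w : DomWeight n) : w.entries.count 0 = w.zNum := by
  rw [entries, Multiset.count_map, zNum]
  rw [Finset.card, Finset.filter_val]
  congr 1
  exact Multiset.filter_congr fun x _ => eq_comm

lemma mem_posXs {w : DomWeight n} {v : ℕ} : v ∈ w.posXs ↔ w.HasX v := by
  unfold posXs
  simp only [Finset.mem_filter, Finset.mem_image, Finset.mem_univ, true_and]
  constructor
  · rintro ⟨_, h⟩; exact h
  · intro h
    refine ⟨?_, h⟩
    obtain ⟨i, hi⟩ := h.2.1
    exact ⟨i, by rw [hi]; simp⟩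

lemma HasX.kept' {w : DomWeight n} {v : ℕ} (h : w.HasX v) : w.kept v :=
  ⟨h.1, fun hg => hg.2.2 h.2.2, fun hl => hl.2.1 h.2.1⟩

lemma EmptyAt.kept' {w : DomWeight n} {v : ℕ} (h : w.EmptyAt v) : w.kept v :=
  ⟨h.1, fun hg => h.2.1 hg.2.1, fun hl => h.2.2 hl.2.2⟩

end DomWeight
namespace DomWeight
variable {n : ℕ}

lemma count_entries_of_ne (w : DomWeight n) {k : ℤ} (hk : k ≠ 0) :
    w.entries.count k = if w.IsEntry k then 1 else 0 := by
  rw [entries, Multiset.count_map]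
  have : Multiset.filter (fun a => k = w.coeff a) Finset.univ.val
      = (Finset.univ.filter fun a => k = w.coeff a).val := by
    rw [Finset.filter_val]
  rw [this]
  split_ifs with h
  · obtain ⟨i, hi⟩ := h
    have : (Finset.univ.filter fun a => k = w.coeff a) = {i} := by
      apply Finset.eq_singleton_iff_unique_mem.2
      refine ⟨by simp [hi.symm], ?_⟩
      intro j hj
      simp only [Finset.mem_filter, Finset.mem_univ, true_and] at hj
      by_contra hne
      have := w.regular' j i hne (by rw [← hj, hi])
      rw [hj] at hk
      exact hk this
    rw [this]; rfl
  · have : (Finset.univ.filter fun a => k = w.coeff a) = ∅ := by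
      apply Finset.filter_eq_empty_iff.2
      intro i _ hi
      exact h ⟨i, hi.symm⟩
    rw [this]; rfl

lemma zNum_decomp (w : DomWeight n) : w.zNum = 2 * w.numX0 + w.barz := by
  rw [numX0, barz]; omega

lemma kept_infinite (w : DomWeight n) : (setOf w.kept).Infinite := by
  set B := (Finset.univ.sup fun i : Fin n => (w.coeff i).natAbs) + 1 with hB
  have hsub : Set.Ici B ⊆ setOf w.kept := by
    intro v hv
    have hv' : B ≤ v := hv
    have hent : ∀ k : ℤ, k.natAbs = v → ¬ w.IsEntry k := by
      rintro k hkv ⟨i, hi⟩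
      have h1 : (w.coeff i).natAbs ≤ B - 1 :=
        Finset.le_sup (f := fun i : Fin n => (w.coeff i).natAbs) (Finset.mem_univ i)
      rw [hi, hkv] at h1
      omega
    have h1 : ¬ w.IsEntry (v : ℤ) := hent _ (by simp)
    have h2 : ¬ w.IsEntry (-(v : ℤ)) := hent _ (by simp)
    exact ⟨by omega, fun hg => h1 hg.2.1, fun hl => h2 hl.2.2⟩
  exact Set.Infinite.mono hsub (Set.Ici_infinite B)

lemma keepMap_eq_count (w : DomWeight n) (v : ℕ) :
    w.keepMap v = Nat.count w.kept (v + 1) := by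
  rw [Nat.count_eq_card_filter_range, keepMap]
  have : ((Finset.Icc 1 v).filter fun u => ¬ w.HasGt u ∧ ¬ w.HasLt u)
      = (Finset.range (v + 1)).filter w.kept := by
    ext u
    simp only [Finset.mem_filter, Finset.mem_Icc, Finset.mem_range, Nat.lt_succ_iff, kept]
    constructor
    · rintro ⟨⟨h1, h2⟩, h3⟩; exact ⟨h2, h1, h3⟩
    · rintro ⟨h2, h1, h3⟩; exact ⟨⟨h1, h2⟩, h3⟩
  rw [this]

lemma keepMap_zero (w : DomWeight n) : w.keepMap 0 = 0 := by
  simp [keepMap]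

lemma keepMap_pos {w : DomWeight n} {v : ℕ} (h : w.kept v) : 0 < w.keepMap v := by
  rw [keepMap_eq_count, Nat.count_succ, if_pos h]; omega

lemma keepMap_mono (w : DomWeight n) {u v : ℕ} (h : u ≤ v) : w.keepMap u ≤ w.keepMap v := by
  rw [keepMap_eq_count, keepMap_eq_count]
  exact Nat.count_monotone _ (by omega)

lemma keepMap_lt_iff {w : DomWeight n} {a b : ℕ} (hb : b = 0 ∨ w.kept b) :
    w.keepMap a < w.keepMap b ↔ a < b := by
  constructor
  · intro h
    by_contra hab
    have := w.keepMap_mono (show b ≤ a by omega)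
    omega
  · intro h
    rcases hb with rfl | hb
    · omega
    · rw [keepMap_eq_count, keepMap_eq_count]
      calc Nat.count w.kept (a + 1) ≤ Nat.count w.kept b := Nat.count_monotone _ (by omega)
        _ < Nat.count w.kept (b + 1) := Nat.count_lt_count_succ_iff.2 hb

/-- The inverse relabelling. -/
noncomputable def psi (w : DomWeight n) (u : ℕ) : ℕ := Nat.nth w.kept (u - 1)

lemma psi_keepMap {w : DomWeight n} {v : ℕ} (h : w.kept v) : w.psi (w.keepMap v) = v := by
  rw [psi, keepMap_eq_count, Nat.count_succ, if_pos h]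
  simpa using Nat.nth_count h

lemma kept_psi (w : DomWeight n) (u : ℕ) : w.kept (w.psi u) :=
  Nat.nth_mem_of_infinite w.kept_infinite _

lemma keepMap_psi {w : DomWeight n} {u : ℕ} (h : 0 < u) : w.keepMap (w.psi u) = u := by
  rw [keepMap_eq_count, psi, Nat.count_succ, if_pos (Nat.nth_mem_of_infinite w.kept_infinite _),
    Nat.count_nth_of_infinite w.kept_infinite]
  omega

lemma keepMap_injOn {w : DomWeight n} {a b : ℕ} (ha : w.kept a) (hb : w.kept b)
    (h : w.keepMap a = w.keepMap b) : a = b := by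
  rcases lt_trichotomy a b with h' | h' | h'
  · exact absurd ((keepMap_lt_iff (Or.inr hb)).2 h') (by omega)
  · exact h'
  · exact absurd ((keepMap_lt_iff (Or.inr ha)).2 h') (by omega)

lemma not_hasX_iff_empty {w : DomWeight n} {u : ℕ} (hu : w.kept u) :
    w.EmptyAt u ↔ ¬ w.HasX u := by
  constructor
  · intro h hx; exact h.2.1 hx.2.1
  · intro h
    refine ⟨hu.1, ?_, ?_⟩
    · intro he
      by_cases he' : w.IsEntry (-(u : ℤ))
      · exact h ⟨hu.1, he, he'⟩
      · exact hu.2.1 ⟨hu.1, he, he'⟩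
    · intro he'
      by_cases he : w.IsEntry (u : ℤ)
      · exact h ⟨hu.1, he, he'⟩
      · exact hu.2.2 ⟨hu.1, he, he'⟩

end DomWeight
lemma sort_image_of_strictMonoOn {s : Finset ℕ} {f : ℕ → ℕ}
    (hf : ∀ a ∈ s, ∀ b ∈ s, a < b → f a < f b) :
    (s.image f).sort (· ≤ ·) = (s.sort (· ≤ ·)).map f := by
  have hinj : Set.InjOn f s := by
    intro a ha b hb h
    rcases lt_trichotomy a b with h' | h' | h'
    · exact absurd (hf a ha b hb h') (by omega)
    · exact h'
    · exact absurd (hf b hb a ha h') (by omega)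
  refine (fun hp h1 h2 => List.Perm.eq_of_pairwise' (r := (· ≤ ·)) h1 h2 hp) ?_ ?_ ?_
  · rw [← Multiset.coe_eq_coe, Finset.sort_eq, ← Multiset.map_coe, Finset.sort_eq,
      Finset.image_val_of_injOn hinj]
  · exact Finset.pairwise_sort _ _
  · rw [List.pairwise_map]
    apply List.Pairwise.imp_of_mem (R := (· < ·)) ?_ (Finset.sortedLT_sort s).pairwise
    intro a b ha hb hab
    exact le_of_lt (hf a (Finset.mem_sort (α := ℕ) (· ≤ ·) |>.1 ha)
      b (Finset.mem_sort (α := ℕ) (· ≤ ·) |>.1 hb) hab)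

namespace DomWeight
variable {n : ℕ}

lemma xVertex_of_le {w : DomWeight n} {i : ℕ} (h : i ≤ w.numX0) : w.xVertex i = 0 := by
  rw [xVertex, if_pos h]

lemma xVertex_mem_posXs {w : DomWeight n} {i : ℕ} (h1 : w.numX0 < i) (h2 : i ≤ w.atyp) :
    w.xVertex i ∈ w.posXs := by
  rw [xVertex, if_neg (by omega)]
  have hlen : (w.posXs.sort (· ≤ ·)).length = w.posXs.card := Finset.length_sort _
  have hcard : i - w.numX0 - 1 < w.posXs.card := by
    have := h2; rw [atyp] at this; omega
  rw [List.getD_eq_getElem _ _ (by omega)]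
  exact Finset.mem_sort (α := ℕ) (· ≤ ·) |>.1 (List.getElem_mem _)

lemma xVertex_cases {w : DomWeight n} {i : ℕ} (h2 : i ≤ w.atyp) :
    w.xVertex i = 0 ∨ w.xVertex i ∈ w.posXs := by
  by_cases h : i ≤ w.numX0
  · exact Or.inl (xVertex_of_le h)
  · exact Or.inr (xVertex_mem_posXs (by omega) h2)

/-- The part of the entries carried by `<` and `>` vertices. -/
noncomputable def gPart (w : DomWeight n) : Multiset ℤ :=
  w.entries.filter fun k => k ≠ 0 ∧ ¬ (w.IsEntry k ∧ w.IsEntry (-k))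

lemma count_pair_sum (s : Finset ℕ) (c : ℕ → ℤ) (k : ℤ) :
    Multiset.count k (∑ v ∈ s, ({c v, -(c v)} : Multiset ℤ)) =
      ∑ v ∈ s, ((if k = c v then 1 else 0) + (if k = -(c v) then 1 else 0)) := by
  rw [Multiset.count_sum']
  refine Finset.sum_congr rfl fun v _ => ?_
  rw [Multiset.insert_eq_cons, Multiset.count_cons, Multiset.count_singleton]
  split_ifs <;> omega

lemma count_posXs_pairs (w : DomWeight n) {k : ℤ} (hk : k ≠ 0) :
    Multiset.count k (∑ v ∈ w.posXs, (({(v : ℤ), -(v : ℤ)}) : Multiset ℤ)) =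
      if w.HasX k.natAbs then 1 else 0 := by
  rw [count_pair_sum]
  have : ∀ v ∈ w.posXs,
      ((if k = (v : ℤ) then 1 else 0) + (if k = -(v : ℤ) then 1 else 0) : ℕ)
        = if v = k.natAbs then 1 else 0 := by
    intro v hv
    have hvpos : 0 < v := (mem_posXs.1 hv).1
    split_ifs with h1 h2 h3 h2 h3 <;> omega
  rw [Finset.sum_congr rfl this, Finset.sum_ite_eq' w.posXs k.natAbs (fun _ => 1)]
  split_ifs with h1 h2 h2
  · rfl
  · exact absurd (mem_posXs.1 h1) h2
  · exact absurd (mem_posXs.2 h2) h1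
  · rfl

lemma hasX_natAbs_of_both {w : DomWeight n} {k : ℤ} (hk : k ≠ 0)
    (h1 : w.IsEntry k) (h2 : w.IsEntry (-k)) : w.HasX k.natAbs := by
  refine ⟨by omega, ?_, ?_⟩
  · rcases lt_or_gt_of_ne hk with h | h
    · have : (k.natAbs : ℤ) = -k := by omega
      rw [this]; exact h2
    · have : (k.natAbs : ℤ) = k := by omega
      rw [this]; exact h1
  · rcases lt_or_gt_of_ne hk with h | h
    · have : -(k.natAbs : ℤ) = k := by omega
      rw [this]; exact h1
    · have : -(k.natAbs : ℤ) = -k := by omega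
      rw [this]; exact h2

lemma entries_decomp (w : DomWeight n) :
    w.entries = Multiset.replicate w.zNum (0 : ℤ) +
      (∑ v ∈ w.posXs, (({(v : ℤ), -(v : ℤ)}) : Multiset ℤ)) + w.gPart := by
  ext k
  rw [Multiset.count_add, Multiset.count_add, Multiset.count_replicate, gPart,
    Multiset.count_filter]
  by_cases hk : k = 0
  · subst hk
    rw [count_entries_zero, if_pos rfl, if_neg (by simp), count_pair_sum]
    have : ∀ v ∈ w.posXs, ((if (0:ℤ) = (v : ℤ) then 1 else 0)
        + (if (0:ℤ) = -(v : ℤ) then 1 else 0) : ℕ) = 0 := by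
      intro v hv
      have hvpos : 0 < v := (mem_posXs.1 hv).1
      split_ifs <;> omega
    rw [Finset.sum_congr rfl this, Finset.sum_const_zero]
    omega
  · rw [count_entries_of_ne w hk, if_neg (show ¬(0:ℤ) = k from fun h => hk h.symm),
      count_posXs_pairs w hk]
    by_cases hb : w.IsEntry k ∧ w.IsEntry (-k)
    · rw [if_pos (hasX_natAbs_of_both hk hb.1 hb.2),
        if_neg (show ¬(k ≠ 0 ∧ ¬(w.IsEntry k ∧ w.IsEntry (-k))) from fun h => h.2 hb)]
      rw [if_pos hb.1]

    · have hx : ¬ w.HasX k.natAbs := by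
        intro hx
        apply hb
        have h1 := hx.2.1
        have h2 := hx.2.2
        rcases lt_or_gt_of_ne hk with h | h
        · have e1 : (k.natAbs : ℤ) = -k := by omega
          rw [e1] at h1; rw [show -(k.natAbs:ℤ) = k by omega] at h2
          exact ⟨h2, h1⟩
        · rw [show (k.natAbs:ℤ) = k by omega] at h1
          rw [show -(k.natAbs:ℤ) = -k by omega] at h2
          exact ⟨h1, h2⟩
      rw [if_neg hx,
        if_pos (show k ≠ 0 ∧ ¬(w.IsEntry k ∧ w.IsEntry (-k)) from ⟨hk, hb⟩)]
      split_ifs <;> omega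

end DomWeight
namespace DomWeight
variable {n : ℕ}

lemma gPart_count (w : DomWeight n) (k : ℤ) :
    w.gPart.count k =
      if (0 < k ∧ w.HasGt k.natAbs) ∨ (k < 0 ∧ w.HasLt k.natAbs) then 1 else 0 := by
  rw [gPart, Multiset.count_filter]
  by_cases hk : k = 0
  · subst hk
    rw [if_neg (fun h => h.1 rfl), if_neg (by rintro (⟨h, -⟩ | ⟨h, -⟩) <;> omega)]
  · rw [count_entries_of_ne w hk]
    have key : ((0 < k ∧ w.HasGt k.natAbs) ∨ (k < 0 ∧ w.HasLt k.natAbs))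
        ↔ (w.IsEntry k ∧ ¬ w.IsEntry (-k)) := by
      constructor
      · rintro (⟨hpos, -, he, hne⟩ | ⟨hneg, -, hne, he⟩)
        · rw [show ((k.natAbs : ℤ)) = k by omega] at he
          rw [show (-(k.natAbs : ℤ)) = -k by omega] at hne
          exact ⟨he, hne⟩
        · rw [show (-(k.natAbs : ℤ)) = k by omega] at he
          rw [show ((k.natAbs : ℤ)) = -k by omega] at hne
          exact ⟨he, hne⟩
      · rintro ⟨he, hne⟩
        rcases lt_or_gt_of_ne hk with h | h
        · right
          refine ⟨h, by omega, ?_, ?_⟩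
          · rw [show ((k.natAbs : ℤ)) = -k by omega]; exact hne
          · rw [show (-(k.natAbs : ℤ)) = k by omega]; exact he
        · left
          refine ⟨h, by omega, ?_, ?_⟩
          · rw [show ((k.natAbs : ℤ)) = k by omega]; exact he
          · rw [show (-(k.natAbs : ℤ)) = -k by omega]; exact hne
    simp only [key]
    split_ifs <;> tauto

lemma gPart_congr {l m : DomWeight n}
    (hsym : ∀ v : ℕ, 1 ≤ v → ((l.HasLt v ↔ m.HasLt v) ∧ (l.HasGt v ↔ m.HasGt v))) :
    l.gPart = m.gPart := by
  ext k
  rw [gPart_count, gPart_count]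
  refine if_congr (or_congr (and_congr_right fun h => (hsym k.natAbs (by omega)).2)
    (and_congr_right fun h => (hsym k.natAbs (by omega)).1)) rfl rfl

lemma kept_congr {l m : DomWeight n}
    (hsym : ∀ v : ℕ, 1 ≤ v → ((l.HasLt v ↔ m.HasLt v) ∧ (l.HasGt v ↔ m.HasGt v))) :
    ∀ v, l.kept v ↔ m.kept v := by
  intro v
  unfold kept
  by_cases hv : 0 < v
  · rw [(hsym v hv).1, (hsym v hv).2]
  · constructor <;> (rintro ⟨h, -⟩; omega)

lemma keepMap_congr {l m : DomWeight n}
    (hsym : ∀ v : ℕ, 1 ≤ v → ((l.HasLt v ↔ m.HasLt v) ∧ (l.HasGt v ↔ m.HasGt v))) :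
    l.keepMap = m.keepMap := by
  funext v
  rw [keepMap, keepMap]
  congr 1
  apply Finset.filter_congr
  intro u hu
  rw [Finset.mem_Icc] at hu
  rw [(hsym u hu.1).1, (hsym u hu.1).2]

end DomWeight
namespace DomWeight

variable {n N : ℕ}

/-- The reduction hypothesis. -/
def RedHyp (m : DomWeight n) (mred : DomWeight N) : Prop :=
  mred.entries = Multiset.replicate m.zNum (0 : ℤ) +
    ∑ v ∈ m.posXs, ({(m.keepMap v : ℤ), -(m.keepMap v : ℤ)} : Multiset ℤ)

variable {m : DomWeight n} {mred : DomWeight N}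

lemma RedHyp.isEntry (h : RedHyp m mred) (k : ℤ) :
    mred.IsEntry k ↔ (k = 0 ∧ m.zNum ≠ 0) ∨
      ∃ v ∈ m.posXs, k = (m.keepMap v : ℤ) ∨ k = -(m.keepMap v : ℤ) := by
  rw [← mem_entries, h]
  simp only [Multiset.mem_add, Multiset.mem_replicate, Multiset.mem_sum,
    Multiset.insert_eq_cons, Multiset.mem_cons, Multiset.mem_singleton]
  constructor
  · rintro (⟨hz, h0⟩ | ⟨v, hv, h1 | h1⟩)
    exacts [Or.inl ⟨h0, hz⟩, Or.inr ⟨v, hv, Or.inl h1⟩, Or.inr ⟨v, hv, Or.inr h1⟩]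
  · rintro (⟨h0, hz⟩ | ⟨v, hv, h1 | h1⟩)
    exacts [Or.inl ⟨hz, h0⟩, Or.inr ⟨v, hv, Or.inl h1⟩, Or.inr ⟨v, hv, Or.inr h1⟩]

lemma RedHyp.hasX (h : RedHyp m mred) (u : ℕ) :
    mred.HasX u ↔ ∃ v ∈ m.posXs, m.keepMap v = u := by
  constructor
  · rintro ⟨hu, he, -⟩
    rcases (h.isEntry u).1 he with ⟨h0, -⟩ | ⟨v, hv, h1 | h1⟩
    · omega
    · exact ⟨v, hv, by omega⟩
    · have := keepMap_pos (mem_posXs.1 hv).kept'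
      omega
  · rintro ⟨v, hv, hvu⟩
    have hpos := keepMap_pos (mem_posXs.1 hv).kept'
    refine ⟨by omega, ?_, ?_⟩
    · exact (h.isEntry u).2 (Or.inr ⟨v, hv, Or.inl (by omega)⟩)
    · exact (h.isEntry (-u)).2 (Or.inr ⟨v, hv, Or.inr (by omega)⟩)

lemma RedHyp.kept_all (h : RedHyp m mred) {u : ℕ} (hu : 0 < u) : mred.kept u := by
  have key : mred.IsEntry u ↔ mred.IsEntry (-(u : ℤ)) := by
    rw [h.isEntry, h.isEntry]
    constructor
    · rintro (⟨h0, -⟩ | ⟨v, hv, h1 | h1⟩)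
      · omega
      · exact Or.inr ⟨v, hv, Or.inr (by omega)⟩
      · exact Or.inr ⟨v, hv, Or.inl (by omega)⟩
    · rintro (⟨h0, -⟩ | ⟨v, hv, h1 | h1⟩)
      · omega
      · exact Or.inr ⟨v, hv, Or.inr (by omega)⟩
      · exact Or.inr ⟨v, hv, Or.inl (by omega)⟩
  exact ⟨hu, fun hg => hg.2.2 (key.1 hg.2.1), fun hl => hl.2.1 (key.2 hl.2.2)⟩

lemma RedHyp.hasX_transfer (h : RedHyp m mred) {u : ℕ} (hu : m.kept u) :
    m.HasX u ↔ mred.HasX (m.keepMap u) := by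
  rw [h.hasX]
  constructor
  · intro hx
    exact ⟨u, mem_posXs.2 hx, rfl⟩
  · rintro ⟨v, hv, hvu⟩
    have := keepMap_injOn (mem_posXs.1 hv).kept' hu hvu
    subst this
    exact mem_posXs.1 hv

lemma RedHyp.empty_transfer (h : RedHyp m mred) {u : ℕ} (hu : m.kept u) :
    m.EmptyAt u ↔ mred.EmptyAt (m.keepMap u) := by
  rw [not_hasX_iff_empty hu, not_hasX_iff_empty (h.kept_all (keepMap_pos hu)),
    h.hasX_transfer hu]

lemma RedHyp.zNum_eq (h : RedHyp m mred) : mred.zNum = m.zNum := by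
  rw [← count_entries_zero, h, Multiset.count_add, Multiset.count_replicate, if_pos rfl,
    count_pair_sum]
  have : ∀ v ∈ m.posXs, ((if (0:ℤ) = (m.keepMap v : ℤ) then 1 else 0)
      + (if (0:ℤ) = -(m.keepMap v : ℤ) then 1 else 0) : ℕ) = 0 := by
    intro v hv
    have := keepMap_pos (mem_posXs.1 hv).kept'
    split_ifs <;> omega
  rw [Finset.sum_congr rfl this, Finset.sum_const_zero]
  rfl

lemma RedHyp.numX0_eq (h : RedHyp m mred) : mred.numX0 = m.numX0 := by
  rw [numX0, numX0, h.zNum_eq]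

lemma RedHyp.barz_eq (h : RedHyp m mred) : mred.barz = m.barz := by
  rw [barz, barz, h.zNum_eq]

lemma RedHyp.posXs_eq (h : RedHyp m mred) : mred.posXs = m.posXs.image m.keepMap := by
  ext u
  rw [mem_posXs, h.hasX, Finset.mem_image]

lemma RedHyp.atyp_eq (h : RedHyp m mred) : mred.atyp = m.atyp := by
  rw [atyp, atyp, h.numX0_eq, h.posXs_eq]
  congr 1
  apply Finset.card_image_of_injOn
  intro a ha b hb hab
  exact keepMap_injOn (mem_posXs.1 ha).kept' (mem_posXs.1 hb).kept' hab

lemma RedHyp.sort_eq (h : RedHyp m mred) :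
    mred.posXs.sort (· ≤ ·) = (m.posXs.sort (· ≤ ·)).map m.keepMap := by
  rw [h.posXs_eq]
  apply sort_image_of_strictMonoOn
  intro a ha b hb hab
  exact (keepMap_lt_iff (Or.inr (mem_posXs.1 hb).kept')).2 hab

lemma RedHyp.xVertex_eq (h : RedHyp m mred) {i : ℕ} (hi : i ≤ m.atyp) :
    mred.xVertex i = m.keepMap (m.xVertex i) := by
  by_cases hle : i ≤ m.numX0
  · rw [xVertex_of_le (by rw [h.numX0_eq]; exact hle), xVertex_of_le hle, keepMap_zero]
  · rw [xVertex, if_neg (by rw [h.numX0_eq]; exact hle), xVertex, if_neg hle, h.numX0_eq,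
      h.sort_eq]
    have hcard : i - m.numX0 - 1 < (m.posXs.sort (· ≤ ·)).length := by
      rw [Finset.length_sort]
      have := hi; rw [atyp] at this; omega
    rw [List.getD_eq_getElem _ _ (by rw [List.length_map]; exact hcard),
      List.getD_eq_getElem _ _ hcard, List.getElem_map]

lemma RedHyp.dist_eq (h : RedHyp m mred) {s t : ℕ} (hs : s = 0 ∨ m.kept s) (ht : m.kept t) :
    mred.dist (m.keepMap s) (m.keepMap t) = m.dist s t := by
  have key : ∀ P : (∀ {w : DomWeight n}, True) → True, True := fun _ => trivial
  have hmem : ∀ u, u ∈ Finset.Ioo s t → m.kept u → 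
      (m.keepMap u ∈ Finset.Ioo (m.keepMap s) (m.keepMap t)) := by
    intro u hu hku
    rw [Finset.mem_Ioo] at hu ⊢
    constructor
    · rcases hs with rfl | hks
      · rw [keepMap_zero]; exact keepMap_pos hku
      · exact (keepMap_lt_iff (Or.inr hku)).2 hu.1
    · exact (keepMap_lt_iff (Or.inr ht)).2 hu.2
  have hmem' : ∀ w', w' ∈ Finset.Ioo (m.keepMap s) (m.keepMap t) → 0 < w' ∧
      (m.psi w' ∈ Finset.Ioo s t) := by
    intro w' hw'
    rw [Finset.mem_Ioo] at hw'
    have hpos : 0 < w' := by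
      rcases hs with rfl | hks
      · rw [keepMap_zero] at hw'; omega
      · have := keepMap_pos hks; omega
    have hphi : m.keepMap (m.psi w') = w' := keepMap_psi hpos
    refine ⟨hpos, Finset.mem_Ioo.2 ⟨?_, ?_⟩⟩
    · have : m.keepMap s < m.keepMap (m.psi w') := by rw [hphi]; exact hw'.1
      by_contra hc
      have := m.keepMap_mono (show m.psi w' ≤ s by omega)
      omega
    · have : m.keepMap (m.psi w') < m.keepMap t := by rw [hphi]; exact hw'.2
      exact (keepMap_lt_iff (Or.inr ht)).1 this
  have hemp : (Finset.Ioo (m.keepMap s) (m.keepMap t)).filter mred.EmptyAt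
      = ((Finset.Ioo s t).filter m.EmptyAt).image m.keepMap := by
    ext w'
    rw [Finset.mem_filter, Finset.mem_image]
    constructor
    · rintro ⟨hw', hew⟩
      obtain ⟨hpos, hmem2⟩ := hmem' w' hw'
      have hku : m.kept (m.psi w') := m.kept_psi w'
      refine ⟨m.psi w', Finset.mem_filter.2 ⟨hmem2, ?_⟩, keepMap_psi hpos⟩
      rw [h.empty_transfer hku, keepMap_psi hpos]
      exact hew
    · rintro ⟨u, hu, rfl⟩
      rw [Finset.mem_filter] at hu
      have hku : m.kept u := hu.2.kept'
      exact ⟨hmem u hu.1 hku, (h.empty_transfer hku).1 hu.2⟩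
  have hxs : (Finset.Ioo (m.keepMap s) (m.keepMap t)).filter mred.HasX
      = ((Finset.Ioo s t).filter m.HasX).image m.keepMap := by
    ext w'
    rw [Finset.mem_filter, Finset.mem_image]
    constructor
    · rintro ⟨hw', hxw⟩
      obtain ⟨hpos, hmem2⟩ := hmem' w' hw'
      have hku : m.kept (m.psi w') := m.kept_psi w'
      refine ⟨m.psi w', Finset.mem_filter.2 ⟨hmem2, ?_⟩, keepMap_psi hpos⟩
      rw [h.hasX_transfer hku, keepMap_psi hpos]
      exact hxw
    · rintro ⟨u, hu, rfl⟩
      rw [Finset.mem_filter] at hu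
      have hku : m.kept u := hu.2.kept'
      exact ⟨hmem u hu.1 hku, (h.hasX_transfer hku).1 hu.2⟩
  have hinj : ∀ (s' : Finset ℕ), (∀ u ∈ s', m.kept u) → (s'.image m.keepMap).card = s'.card := by
    intro s' hs'
    apply Finset.card_image_of_injOn
    intro a ha b hb hab
    exact keepMap_injOn (hs' a ha) (hs' b hb) hab
  rw [dist, dist, hemp, hxs, hinj _ (fun u hu => (Finset.mem_filter.1 hu).2.kept'),
    hinj _ (fun u hu => (Finset.mem_filter.1 hu).2.kept')]

lemma RedHyp.len_eq (h : RedHyp m mred) {i t : ℕ} (hi : i ≤ m.atyp) (ht : m.kept t) :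
    mred.len i (m.keepMap t) = m.len i t := by
  rw [len, len, h.xVertex_eq hi, h.numX0_eq, h.barz_eq]
  rcases xVertex_cases hi with h0 | hmem
  · rw [h0, keepMap_zero]
    simp only [lt_irrefl, if_false]
    rw [show (0:ℕ) = m.keepMap 0 from (keepMap_zero m).symm]
    rw [h.dist_eq (Or.inl rfl) ht]
    simp [keepMap_zero]
  · have hkept := (mem_posXs.1 hmem).kept'
    have h1 : 0 < m.xVertex i := hkept.1
    have h2 : 0 < m.keepMap (m.xVertex i) := keepMap_pos hkept
    rw [if_pos h2, if_pos h1, h.dist_eq (Or.inr hkept) ht]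

lemma RedHyp.dest_fwd (h : RedHyp m mred) {i t : ℕ} (hi : i ≤ m.atyp)
    (hd : m.IsRightMoveDest i t) : mred.IsRightMoveDest i (m.keepMap t) := by
  obtain ⟨hemp, hlt, hlen, hmin⟩ := hd
  have hkt : m.kept t := hemp.kept'
  refine ⟨(h.empty_transfer hkt).1 hemp, ?_, ?_, ?_⟩
  · rw [h.xVertex_eq hi]
    rcases xVertex_cases hi with h0 | hmem
    · rw [h0, keepMap_zero]; exact keepMap_pos hkt
    · exact (keepMap_lt_iff (Or.inr hkt)).2 hlt
  · rw [h.len_eq hi hkt]; exact hlen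
  · intro s' hs1 hs2 hs3
    have hpos : 0 < s' := by
      have : 0 ≤ mred.xVertex i := Nat.zero_le _
      omega
    have hks : mred.kept s' := h.kept_all hpos
    set u := m.psi s' with hu
    have hku : m.kept u := m.kept_psi s'
    have hphi : m.keepMap u = s' := keepMap_psi hpos
    have hut : u < t := by
      apply (keepMap_lt_iff (Or.inr hkt)).1
      rw [hphi]; exact hs2
    have hxu : m.xVertex i < u := by
      have : mred.xVertex i < m.keepMap u := by rw [hphi]; exact hs1
      rw [h.xVertex_eq hi] at this
      by_contra hc
      have := m.keepMap_mono (show u ≤ m.xVertex i by omega)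
      omega
    have hempU : m.EmptyAt u := by
      rw [h.empty_transfer hku, hphi]; exact hs3
    have := hmin u hxu hut hempU
    rw [← hphi, h.len_eq hi hku]
    exact this

lemma RedHyp.dest_bwd (h : RedHyp m mred) {i w' : ℕ} (hi : i ≤ m.atyp)
    (hd : mred.IsRightMoveDest i w') :
    m.IsRightMoveDest i (m.psi w') ∧ m.keepMap (m.psi w') = w' := by
  obtain ⟨hemp, hlt, hlen, hmin⟩ := hd
  have hpos : 0 < w' := hemp.1
  have hphi : m.keepMap (m.psi w') = w' := keepMap_psi hpos
  have hkt : m.kept (m.psi w') := m.kept_psi w'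
  refine ⟨⟨?_, ?_, ?_, ?_⟩, hphi⟩
  · rw [h.empty_transfer hkt, hphi]; exact hemp
  · rw [h.xVertex_eq hi] at hlt
    by_contra hc
    have := m.keepMap_mono (show m.psi w' ≤ m.xVertex i by omega)
    omega
  · rw [← h.len_eq hi hkt, hphi]; exact hlen
  · intro s hs1 hs2 hs3
    have hks : m.kept s := hs3.kept'
    rw [← h.len_eq hi hks]
    apply hmin
    · rw [h.xVertex_eq hi]
      exact (keepMap_lt_iff (Or.inr hks)).2 hs1
    · rw [← hphi]
      exact (keepMap_lt_iff (Or.inr hkt)).2 hs2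
    · rw [← h.empty_transfer hks]; exact hs3

end DomWeight
namespace DomWeight
variable {n : ℕ}

/-- Relabelling map on entry values. -/
noncomputable def fmap (w : DomWeight n) : ℤ → ℤ := fun k =>
  if 0 < k then (w.keepMap k.toNat : ℤ) else if k < 0 then -(w.keepMap (-k).toNat : ℤ) else 0

/-- Inverse relabelling map on entry values. -/
noncomputable def gmap (w : DomWeight n) : ℤ → ℤ := fun k =>
  if 0 < k then (w.psi k.toNat : ℤ) else if k < 0 then -(w.psi (-k).toNat : ℤ) else 0

lemma fmap_natCast (w : DomWeight n) (v : ℕ) : w.fmap (v : ℤ) = (w.keepMap v : ℤ) := by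
  rcases Nat.eq_zero_or_pos v with rfl | hv
  · simp [fmap, keepMap_zero]
  · rw [fmap]
    simp only [if_pos (show (0:ℤ) < v by exact_mod_cast hv)]
    rw [Int.toNat_natCast]

lemma fmap_neg_natCast (w : DomWeight n) (v : ℕ) : w.fmap (-(v : ℤ)) = -(w.keepMap v : ℤ) := by
  rcases Nat.eq_zero_or_pos v with rfl | hv
  · simp [fmap, keepMap_zero]
  · rw [fmap]
    simp only [if_neg (show ¬(0:ℤ) < -(v:ℤ) by omega), if_pos (show -(v:ℤ) < 0 by exact_mod_cast (by omega : -(v:ℤ) < 0)), neg_neg]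
    rw [Int.toNat_natCast]

lemma gmap_natCast (w : DomWeight n) {v : ℕ} (hv : 0 < v) : w.gmap (v : ℤ) = (w.psi v : ℤ) := by
  rw [gmap]
  simp only [if_pos (show (0:ℤ) < v by exact_mod_cast hv)]
  rw [Int.toNat_natCast]

lemma gmap_neg_natCast (w : DomWeight n) {v : ℕ} (hv : 0 < v) :
    w.gmap (-(v : ℤ)) = -(w.psi v : ℤ) := by
  rw [gmap]
  simp only [if_neg (show ¬(0:ℤ) < -(v:ℤ) by omega), if_pos (show -(v:ℤ) < 0 by omega), neg_neg]
  rw [Int.toNat_natCast]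

lemma fmap_pair (w : DomWeight n) (v : ℕ) :
    Multiset.map w.fmap ({(v : ℤ), -(v : ℤ)} : Multiset ℤ) =
      ({(w.keepMap v : ℤ), -(w.keepMap v : ℤ)} : Multiset ℤ) := by
  rw [Multiset.insert_eq_cons, Multiset.map_cons, Multiset.map_singleton,
    fmap_natCast, fmap_neg_natCast, Multiset.insert_eq_cons]

lemma gmap_pair (w : DomWeight n) {v : ℕ} (hv : 0 < v) :
    Multiset.map w.gmap ({(v : ℤ), -(v : ℤ)} : Multiset ℤ) =
      ({(w.psi v : ℤ), -(w.psi v : ℤ)} : Multiset ℤ) := by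
  rw [Multiset.insert_eq_cons, Multiset.map_cons, Multiset.map_singleton,
    gmap_natCast w hv, gmap_neg_natCast w hv, Multiset.insert_eq_cons]

lemma gmap_fmap_pair (w : DomWeight n) {v : ℕ} (hv : v = 0 ∨ w.kept v) :
    Multiset.map w.gmap ({(w.keepMap v : ℤ), -(w.keepMap v : ℤ)} : Multiset ℤ) =
      ({(v : ℤ), -(v : ℤ)} : Multiset ℤ) := by
  rcases hv with rfl | hv
  · rw [keepMap_zero]
    simp [gmap]
  · rw [gmap_pair w (keepMap_pos hv), psi_keepMap hv]

lemma map_zero_replicate (f : ℤ → ℤ) (hf : f 0 = 0) (z : ℕ) :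
    Multiset.map f (Multiset.replicate z (0 : ℤ)) = Multiset.replicate z (0 : ℤ) := by
  rw [Multiset.map_replicate, hf]

lemma fmap_zero (w : DomWeight n) : w.fmap 0 = 0 := by simp [fmap]

lemma gmap_zero (w : DomWeight n) : w.gmap 0 = 0 := by simp [gmap]

lemma map_multiset_sum (f : ℤ → ℤ) (s : Finset ℕ) (g : ℕ → Multiset ℤ) :
    Multiset.map f (∑ i ∈ s, g i) = ∑ i ∈ s, Multiset.map f (g i) :=
  map_sum (Multiset.mapAddMonoidHom f) g s

end DomWeight
namespace DomWeight
variable {n : ℕ}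

lemma entries_decomp' (w : DomWeight n) :
    w.entries = w.gPart + (Multiset.replicate w.zNum (0 : ℤ) +
      ∑ v ∈ w.posXs, (({(v : ℤ), -(v : ℤ)}) : Multiset ℤ)) := by
  rw [entries_decomp w, add_comm]

end DomWeight

lemma mem_selected {r i : ℕ} {θ : ℕ → Bool} (hi : i ∈ selected r θ) : 1 ≤ i ∧ i ≤ r :=
  Finset.mem_Icc.1 (Finset.mem_filter.1 hi).1

/-- If `λ, μ ∈ ℤⁿ₊₊` have the same atypicality `r`, the same `z̄`, and the same
`<`, `>` symbols at every vertex, and `λ_red, μ_red ∈ ℤ^{2r+z̄}₊₊` are the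
reductions obtained by deleting all `<`, `>` vertices and relabelling, then for
every `θ ∈ {0,1}^r`, `λ = R_θ(μ)` iff `λ_red = R_θ(μ_red)`; consequently
`a_{λμ} = a_{λ_red μ_red}`. -/
theorem stmt9 (n r : ℕ) (l m : DomWeight n)
    (hrl : l.atyp = r) (hrm : m.atyp = r) (hz : l.barz = m.barz)
    (hsym : ∀ v : ℕ, 1 ≤ v → ((l.HasLt v ↔ m.HasLt v) ∧ (l.HasGt v ↔ m.HasGt v)))
    (lred mred : DomWeight (2 * r + l.barz))
    (hlred : lred.entries = Multiset.replicate l.zNum (0 : ℤ) +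
      ∑ v ∈ l.posXs, ({(l.keepMap v : ℤ), -(l.keepMap v : ℤ)} : Multiset ℤ))
    (hmred : mred.entries = Multiset.replicate m.zNum (0 : ℤ) +
      ∑ v ∈ m.posXs, ({(m.keepMap v : ℤ), -(m.keepMap v : ℤ)} : Multiset ℤ)) :
    (∀ θ : ℕ → Bool, (m.IsRightPathRes θ l ↔ mred.IsRightPathRes θ lred)) ∧
    DomWeight.aCoeff l m = DomWeight.aCoeff lred mred := by
  classical
  have hkm : l.keepMap = m.keepMap := DomWeight.keepMap_congr hsym
  have hkept : ∀ v, l.kept v ↔ m.kept v := DomWeight.kept_congr hsym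
  have hm : m.RedHyp mred := hmred
  have hl : l.RedHyp lred := hlred
  have hSel : ∀ θ : ℕ → Bool, selected mred.atyp θ = selected m.atyp θ := by
    intro θ; rw [hm.atyp_eq]
  have main : ∀ θ : ℕ → Bool, m.IsRightPathRes θ l ↔ mred.IsRightPathRes θ lred := by
    intro θ
    constructor
    · rintro ⟨dest, hdest, heq⟩
      refine ⟨fun i => m.keepMap (dest i), ?_, ?_⟩
      · rw [hSel]
        intro i hi
        exact hm.dest_fwd (mem_selected hi).2 (hdest i hi)
      · rw [hSel]
        rw [DomWeight.entries_decomp' l, DomWeight.entries_decomp' m,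
          DomWeight.gPart_congr hsym, add_assoc m.gPart, add_assoc m.gPart] at heq
        have heq2 := add_left_cancel heq
        have heq3 := congrArg (Multiset.map m.fmap) heq2
        simp only [Multiset.map_add, DomWeight.map_multiset_sum, DomWeight.fmap_pair,
          DomWeight.map_zero_replicate m.fmap (DomWeight.fmap_zero m)] at heq3
        have hsum : (∑ i ∈ selected m.atyp θ,
            ({(mred.xVertex i : ℤ), -(mred.xVertex i : ℤ)} : Multiset ℤ))
            = ∑ i ∈ selected m.atyp θ,
            ({(m.keepMap (m.xVertex i) : ℤ), -(m.keepMap (m.xVertex i) : ℤ)} : Multiset ℤ) :=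
          Finset.sum_congr rfl fun i hi => by rw [hm.xVertex_eq (mem_selected hi).2]
        rw [hlred, hmred, hkm, hsum]
        exact heq3
    · rintro ⟨dest', hdest', heq'⟩
      rw [hSel] at hdest' heq'
      refine ⟨fun i => m.psi (dest' i), ?_, ?_⟩
      · intro i hi
        exact (hm.dest_bwd (mem_selected hi).2 (hdest' i hi)).1
      · rw [hlred, hmred, hkm] at heq'
        have heq3 := congrArg (Multiset.map m.gmap) heq'
        simp only [Multiset.map_add, DomWeight.map_multiset_sum,
          DomWeight.map_zero_replicate m.gmap (DomWeight.gmap_zero m)] at heq3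
        have e1 : (∑ v ∈ l.posXs, Multiset.map m.gmap
            ({(m.keepMap v : ℤ), -(m.keepMap v : ℤ)} : Multiset ℤ))
            = ∑ v ∈ l.posXs, (({(v : ℤ), -(v : ℤ)}) : Multiset ℤ) :=
          Finset.sum_congr rfl fun v hv => DomWeight.gmap_fmap_pair m
            (Or.inr ((hkept v).1 (DomWeight.mem_posXs.1 hv).kept'))
        have e2 : (∑ v ∈ m.posXs, Multiset.map m.gmap
            ({(m.keepMap v : ℤ), -(m.keepMap v : ℤ)} : Multiset ℤ))
            = ∑ v ∈ m.posXs, (({(v : ℤ), -(v : ℤ)}) : Multiset ℤ) :=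
          Finset.sum_congr rfl fun v hv => DomWeight.gmap_fmap_pair m
            (Or.inr (DomWeight.mem_posXs.1 hv).kept')
        have e3 : (∑ i ∈ selected m.atyp θ, Multiset.map m.gmap
            ({(mred.xVertex i : ℤ), -(mred.xVertex i : ℤ)} : Multiset ℤ))
            = ∑ i ∈ selected m.atyp θ,
              ({(m.xVertex i : ℤ), -(m.xVertex i : ℤ)} : Multiset ℤ) := by
          refine Finset.sum_congr rfl fun i hi => ?_
          rw [hm.xVertex_eq (mem_selected hi).2]
          exact DomWeight.gmap_fmap_pair m ((DomWeight.xVertex_cases (mem_selected hi).2).imp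
            id fun h => (DomWeight.mem_posXs.1 h).kept')
        have e4 : (∑ i ∈ selected m.atyp θ, Multiset.map m.gmap
            ({(dest' i : ℤ), -(dest' i : ℤ)} : Multiset ℤ))
            = ∑ i ∈ selected m.atyp θ,
              ({(m.psi (dest' i) : ℤ), -(m.psi (dest' i) : ℤ)} : Multiset ℤ) :=
          Finset.sum_congr rfl fun i hi =>
            DomWeight.gmap_pair m (hdest' i hi).1.1
        rw [e1, e2, e3, e4] at heq3
        rw [DomWeight.entries_decomp' l, DomWeight.entries_decomp' m,
          DomWeight.gPart_congr hsym, add_assoc m.gPart, add_assoc m.gPart]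
        exact congrArg (m.gPart + ·) heq3
  refine ⟨main, ?_⟩
  unfold DomWeight.aCoeff
  rw [hm.zNum_eq, hl.zNum_eq]
  exact if_congr (exists_congr fun θ => main θ) rfl rfl
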